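/- Let d ≥ 2 and for each i = 1,...,d let g_i : Fin N_i → ℝ be given functions and f_0 ∈ ℝ. Define 2×2 matrices: for each j, G_1(j) = row vector (1, g_1(j)), G_i(j) = [[1, g_i(j)],[0,1]] for 2 ≤ i ≤ d-1, and G_d(j) = column vector (g_d(j) + f_0, 1). Then for every multi-index (j_1,...,j_d), the matrix product G_1(j_1)·G_2(j_2)···G_d(j_d) is the 1×1 matrix with entry f_0 + g_1(j_1) + g_2(j_2) + ... + g_d(j_d). -/
import Mathlib


open Matrix

lemma upper_tri_list_prod (l : List ℝ) :
    (l.map (fun x => (!![1, x; 0, 1] : Matrix (Fin 2) (Fin 2) ℝ))).prod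
      = !![1, l.sum; 0, 1] := by
  induction l with
  | nil =>
    simp [Matrix.one_fin_two]
  | cons a t ih =>
    simp [ih, Matrix.mul_fin_two, add_comm]

lemma filter_map_sum {α : Type*} (l : List α) (p : α → Prop) [DecidablePred p]
    (f : α → ℝ) :
    ((l.filter (fun a => decide (p a))).map f).sum
      = (l.map (fun a => if p a then f a else 0)).sum := by
  induction l with
  | nil => simp
  | cons a t ih =>
    by_cases h : p a <;> simp [h, ih]

/-- The first-order ANOVA decomposition admits an exact TT representation
with all TT-ranks equal to 2: the product of the TT-core slices at any
multi-index equals the 1×1 matrix with entry `f0 + ∑ i, g i (j i)`. -/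
theorem tt_anova_representation
    (d : ℕ) (hd : 2 ≤ d) (N : Fin d → ℕ)
    (g : ∀ i : Fin d, Fin (N i) → ℝ) (f0 : ℝ)
    (j : ∀ i : Fin d, Fin (N i)) :
    (!![1, g ⟨0, by omega⟩ (j ⟨0, by omega⟩)] : Matrix (Fin 1) (Fin 2) ℝ) *
      (((List.finRange d).filter
          (fun i : Fin d => 0 < (i : ℕ) ∧ (i : ℕ) < d - 1)).map
          (fun i => (!![1, g i (j i); 0, 1] : Matrix (Fin 2) (Fin 2) ℝ))).prod
      *
      (!![g ⟨d - 1, by omega⟩ (j ⟨d - 1, by omega⟩) + f0; 1] :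
        Matrix (Fin 2) (Fin 1) ℝ)
    = !![f0 + ∑ i : Fin d, g i (j i)] := by
  set p : Fin d → Prop := fun i => 0 < (i : ℕ) ∧ (i : ℕ) < d - 1 with hp
  have hmap :
      ((List.finRange d).filter
          (fun i : Fin d => 0 < (i : ℕ) ∧ (i : ℕ) < d - 1)).map
          (fun i => (!![1, g i (j i); 0, 1] : Matrix (Fin 2) (Fin 2) ℝ))
        = (((List.finRange d).filter
            (fun i : Fin d => 0 < (i : ℕ) ∧ (i : ℕ) < d - 1)).map
            (fun i => g i (j i))).map
            (fun x => (!![1, x; 0, 1] : Matrix (Fin 2) (Fin 2) ℝ)) := by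
    rw [List.map_map]; rfl
  rw [hmap, upper_tri_list_prod]
  set S : ℝ := (((List.finRange d).filter
      (fun i : Fin d => 0 < (i : ℕ) ∧ (i : ℕ) < d - 1)).map
      (fun i => g i (j i))).sum with hS
  have hSfin : S = ∑ i ∈ Finset.univ.filter p, g i (j i) := by
    rw [hS, filter_map_sum (List.finRange d) p (fun i => g i (j i)),
      ← Fin.sum_univ_def, Finset.sum_filter]
  have i0 : Fin d := ⟨0, by omega⟩
  have hne : (⟨0, by omega⟩ : Fin d) ≠ ⟨d - 1, by omega⟩ := by
    intro h
    have := Fin.mk.injEq (n := d) 0 (by omega) (d-1) (by omega)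
    simp [Fin.ext_iff] at h
    omega
  have hcompl : Finset.univ.filter (fun i => ¬ p i)
      = {(⟨0, by omega⟩ : Fin d), ⟨d - 1, by omega⟩} := by
    ext i
    simp [hp, Fin.ext_iff]
    omega
  have hsum : ∑ i : Fin d, g i (j i)
      = S + (g ⟨0, by omega⟩ (j ⟨0, by omega⟩)
          + g ⟨d - 1, by omega⟩ (j ⟨d - 1, by omega⟩)) := by
    rw [hSfin, ← Finset.sum_filter_add_sum_filter_not Finset.univ p
      (fun i => g i (j i)), hcompl, Finset.sum_pair hne]
  ext a b
  fin_cases a; fin_cases b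
  simp [Matrix.mul_apply, Fin.sum_univ_two, hsum]
  ring
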